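/- For every u ∈ ℝ^N and every ψ ∈ V (not necessarily in V_h), one has the error estimate |uᵀ M σ(ψ) − ⟨I u, ψ⟩| ≤ ‖id_V − Π‖ · ‖I‖ · ‖u‖ · ‖ψ‖, where ‖id_V − Π‖ and ‖I‖ are operator norms. Hence the interpolation operator I approximates the L² adjoint of the degrees of freedom operator σ, with error controlled by the projection error ‖id_V − Π‖ (estimate part of the paper's Proposition on the L² adjoint of the degrees of freedom operator). -/

import Mathlib

/-- Estimate part of the Proposition on the L² adjoint of the degrees of
freedom operator: for every `u ∈ ℝ^N` and every `ψ ∈ V`,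
`|uᵀ M σ(ψ) − ⟨I u, ψ⟩| ≤ ‖id_V − Π‖ ‖I‖ ‖u‖ ‖ψ‖`, where `Π = I ∘ σ`. -/
theorem L2_adjoint_of_dof_estimate
    {V : Type*} [NormedAddCommGroup V] [InnerProductSpace ℝ V]
    {N : ℕ}
    (σ : V →L[ℝ] EuclideanSpace ℝ (Fin N))
    (I : EuclideanSpace ℝ (Fin N) →L[ℝ] V)
    (hσI : ∀ c, σ (I c) = c)
    (Mmat : Matrix (Fin N) (Fin N) ℝ)
    (hM : ∀ i j, Mmat i j =
      (inner ℝ (I (EuclideanSpace.single i 1)) (I (EuclideanSpace.single j 1)) : ℝ))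
    (u : EuclideanSpace ℝ (Fin N)) (ψ : V) :
    |(∑ i, u i * ∑ j, Mmat i j * σ ψ j) - (inner ℝ (I u) ψ : ℝ)| ≤
      ‖ContinuousLinearMap.id ℝ V - I.comp σ‖ * ‖I‖ * ‖u‖ * ‖ψ‖ := by
  have key : ∀ a b : EuclideanSpace ℝ (Fin N),
      (inner ℝ (I a) (I b) : ℝ) = ∑ i, a i * ∑ j, Mmat i j * b j := by
    intro a b
    have ha : a = ∑ i, a i • EuclideanSpace.single i (1 : ℝ) := by
      ext k
      rw [WithLp.ofLp_sum, Finset.sum_apply]; simp [EuclideanSpace.single_apply]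
    have hb : b = ∑ j, b j • EuclideanSpace.single j (1 : ℝ) := by
      ext k
      rw [WithLp.ofLp_sum, Finset.sum_apply]; simp [EuclideanSpace.single_apply]
    conv_lhs => rw [ha, hb]
    simp only [map_sum, map_smul, sum_inner, inner_sum, real_inner_smul_left,
      real_inner_smul_right]
    rw [Finset.sum_comm]
    refine Finset.sum_congr rfl fun i _ => ?_
    rw [Finset.mul_sum]
    refine Finset.sum_congr rfl fun j _ => ?_
    rw [hM i j]; ring
  have hsum : (∑ i, u i * ∑ j, Mmat i j * σ ψ j) = (inner ℝ (I u) (I (σ ψ)) : ℝ) :=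
    (key u (σ ψ)).symm
  rw [hsum]
  have hdiff : (inner ℝ (I u) (I (σ ψ)) : ℝ) - inner ℝ (I u) ψ
      = inner ℝ (I u) ((I.comp σ - ContinuousLinearMap.id ℝ V) ψ) := by
    simp [inner_sub_right]
  rw [hdiff]
  calc |(inner ℝ (I u) ((I.comp σ - ContinuousLinearMap.id ℝ V) ψ) : ℝ)|
      ≤ ‖I u‖ * ‖(I.comp σ - ContinuousLinearMap.id ℝ V) ψ‖ :=
        abs_real_inner_le_norm _ _
    _ ≤ (‖I‖ * ‖u‖) * (‖I.comp σ - ContinuousLinearMap.id ℝ V‖ * ‖ψ‖) := by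
        gcongr
        · exact I.le_opNorm u
        · exact (I.comp σ - ContinuousLinearMap.id ℝ V).le_opNorm ψ
    _ = ‖ContinuousLinearMap.id ℝ V - I.comp σ‖ * ‖I‖ * ‖u‖ * ‖ψ‖ := by
        rw [← neg_sub (ContinuousLinearMap.id ℝ V), norm_neg]; ring
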